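/- For all d ≥ 1 the determinant of the square integer matrix B_d of size 2^{d−1} is odd: det(B_d) ≡ 1 (mod 2). -/

import Mathlib

/-- `Afun m i j` is the `(i,j)` entry (0-indexed) of the matrix `A_{m+1}`,
so `A_n = Afun (n-1)`.  `A_1 = (1 1)` and, recursively, `A_n` consists of the
two block rows `(A_{n-1} | E | 0)` and `(0 | E | A_{n-1})`, where the identity
blocks `E` have size `2^(n-2)`. -/
def Afun : ℕ → ℕ → ℕ → ℤ
  | 0, i, j => if i = 0 ∧ (j = 0 ∨ j = 1) then 1 else 0
  | m + 1, i, j =>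
    if i < 2 ^ m then
      if j < 2 ^ (m + 1) then Afun m i j
      else if j < 2 ^ (m + 1) + 2 ^ m then (if j = i + 2 ^ (m + 1) then 1 else 0)
      else 0
    else
      if j < 2 ^ m then 0
      else if j < 2 ^ (m + 1) then (if j = i then 1 else 0)
      else Afun m (i - 2 ^ m) (j - 2 ^ (m + 1))

lemma afun_succ (m i j : ℕ) : Afun (m+1) i j =
    if i < 2 ^ m then
      if j < 2 ^ (m + 1) then Afun m i j
      else if j < 2 ^ (m + 1) + 2 ^ m then (if j = i + 2 ^ (m + 1) then 1 else 0)
      else 0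
    else
      if j < 2 ^ m then 0
      else if j < 2 ^ (m + 1) then (if j = i then 1 else 0)
      else Afun m (i - 2 ^ m) (j - 2 ^ (m + 1)) := rfl

lemma afun_tl {m i j : ℕ} (hi : i < 2^m) (hj : j < 2^(m+1)) : Afun (m+1) i j = Afun m i j := by
  rw [afun_succ, if_pos hi, if_pos hj]
lemma afun_tm {m i j : ℕ} (hi : i < 2^m) (hj1 : 2^(m+1) ≤ j) (hj2 : j < 2^(m+1) + 2^m) :
    Afun (m+1) i j = if j = i + 2^(m+1) then 1 else 0 := by
  rw [afun_succ, if_pos hi, if_neg (by omega), if_pos hj2]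
lemma afun_tr {m i j : ℕ} (hi : i < 2^m) (hj : 2^(m+1) + 2^m ≤ j) : Afun (m+1) i j = 0 := by
  rw [afun_succ, if_pos hi, if_neg (by omega), if_neg (by omega)]
lemma afun_bl {m i j : ℕ} (hi : 2^m ≤ i) (hj : j < 2^m) : Afun (m+1) i j = 0 := by
  rw [afun_succ, if_neg (by omega), if_pos hj]
lemma afun_bm {m i j : ℕ} (hi : 2^m ≤ i) (hj1 : 2^m ≤ j) (hj2 : j < 2^(m+1)) :
    Afun (m+1) i j = if j = i then 1 else 0 := by
  rw [afun_succ, if_neg (by omega), if_neg (by omega), if_pos hj2]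
lemma afun_br {m i j : ℕ} (hi : 2^m ≤ i) (hj : 2^(m+1) ≤ j) :
    Afun (m+1) i j = Afun m (i - 2^m) (j - 2^(m+1)) := by
  have h2 : 2^(m+1) = 2^m + 2^m := by rw [pow_succ]; ring
  rw [afun_succ, if_neg (by omega), if_neg (by omega), if_neg (by omega)]

lemma afun_key : ∀ m t j, t < 2^m → j < 2^(m+1) →
    (Afun (m+1) (2*t) (2*j) = Afun m t j ∧
     Afun (m+1) (2*t) (2*j+1) = (if j = 2*t then 1 else 0) ∧
     Afun (m+1) (2*t+1) (2*j) = (if j = 2*t+1 then 1 else 0) ∧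
     Afun (m+1) (2*t+1) (2*j+1) = Afun m t j) := by
  intro m
  induction m with
  | zero =>
    intro t j ht hj
    interval_cases t <;> interval_cases j <;> refine ⟨?_, ?_, ?_, ?_⟩ <;> decide
  | succ m ih =>
    intro t j ht hj
    have h1 : 2^(m+1) = 2^m + 2^m := by rw [pow_succ]; ring
    have h2 : 2^(m+2) = 2^(m+1) + 2^(m+1) := by rw [pow_succ 2 (m+1)]; ring
    refine ⟨?_, ?_, ?_, ?_⟩
    · -- Afun (m+2) (2t) (2j) = Afun (m+1) t j
      by_cases hT : t < 2^m
      · by_cases hj1 : j < 2^(m+1)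
        · rw [afun_tl (by omega) (by omega), afun_tl hT hj1, (ih t j hT hj1).1]
        · by_cases hj2 : j < 2^(m+1) + 2^m
          · rw [afun_tm (by omega) (by omega) (by omega), afun_tm hT (by omega) hj2]
            by_cases he : j = t + 2^(m+1)
            · rw [if_pos he, if_pos (by omega)]
            · rw [if_neg he, if_neg (by omega)]
          · rw [afun_tr (by omega) (by omega), afun_tr hT (by omega)]
      · by_cases hj1 : j < 2^m
        · rw [afun_bl (by omega) (by omega), afun_bl (by omega) hj1]
        · by_cases hj2 : j < 2^(m+1)
          · rw [afun_bm (by omega) (by omega) (by omega), afun_bm (by omega) (by omega) hj2]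
            by_cases he : j = t
            · rw [if_pos (by omega), if_pos he]
            · rw [if_neg (by omega), if_neg he]
          · rw [show Afun (m+1) t j = Afun m (t - 2^m) (j - 2^(m+1)) from
                afun_br (by omega) (by omega),
              afun_br (by omega) (by omega),
              show 2*t - 2^(m+1) = 2*(t - 2^m) by omega,
              show 2*j - 2^(m+2) = 2*(j - 2^(m+1)) by omega,
              (ih (t - 2^m) (j - 2^(m+1)) (by omega) (by omega)).1]
    · -- Afun (m+2) (2t) (2j+1) = if j = 2t
      by_cases hT : t < 2^m
      · by_cases hj1 : j < 2^(m+1)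
        · rw [afun_tl (by omega) (by omega), (ih t j hT hj1).2.1]
        · by_cases hj2 : j < 2^(m+1) + 2^m
          · rw [afun_tm (by omega) (by omega) (by omega), if_neg (by omega), if_neg (by omega)]
          · rw [afun_tr (by omega) (by omega), if_neg (by omega)]
      · by_cases hj1 : j < 2^m
        · rw [afun_bl (by omega) (by omega), if_neg (by omega)]
        · by_cases hj2 : j < 2^(m+1)
          · rw [afun_bm (by omega) (by omega) (by omega), if_neg (by omega), if_neg (by omega)]
          · rw [afun_br (by omega) (by omega),
              show 2*t - 2^(m+1) = 2*(t - 2^m) by omega,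
              show 2*j+1 - 2^(m+2) = 2*(j - 2^(m+1))+1 by omega,
              (ih (t - 2^m) (j - 2^(m+1)) (by omega) (by omega)).2.1]
            by_cases he : j = 2*t
            · rw [if_pos (by omega), if_pos he]
            · rw [if_neg (by omega), if_neg he]
    · -- Afun (m+2) (2t+1) (2j) = if j = 2t+1
      by_cases hT : t < 2^m
      · by_cases hj1 : j < 2^(m+1)
        · rw [afun_tl (by omega) (by omega), (ih t j hT hj1).2.2.1]
        · by_cases hj2 : j < 2^(m+1) + 2^m
          · rw [afun_tm (by omega) (by omega) (by omega), if_neg (by omega), if_neg (by omega)]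
          · rw [afun_tr (by omega) (by omega), if_neg (by omega)]
      · by_cases hj1 : j < 2^m
        · rw [afun_bl (by omega) (by omega), if_neg (by omega)]
        · by_cases hj2 : j < 2^(m+1)
          · rw [afun_bm (by omega) (by omega) (by omega), if_neg (by omega), if_neg (by omega)]
          · rw [afun_br (by omega) (by omega),
              show 2*t+1 - 2^(m+1) = 2*(t - 2^m)+1 by omega,
              show 2*j - 2^(m+2) = 2*(j - 2^(m+1)) by omega,
              (ih (t - 2^m) (j - 2^(m+1)) (by omega) (by omega)).2.2.1]
            by_cases he : j = 2*t+1
            · rw [if_pos (by omega), if_pos he]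
            · rw [if_neg (by omega), if_neg he]
    · -- Afun (m+2) (2t+1) (2j+1) = Afun (m+1) t j
      by_cases hT : t < 2^m
      · by_cases hj1 : j < 2^(m+1)
        · rw [afun_tl (by omega) (by omega), afun_tl hT hj1, (ih t j hT hj1).2.2.2]
        · by_cases hj2 : j < 2^(m+1) + 2^m
          · rw [afun_tm (by omega) (by omega) (by omega), afun_tm hT (by omega) hj2]
            by_cases he : j = t + 2^(m+1)
            · rw [if_pos (by omega), if_pos he]
            · rw [if_neg (by omega), if_neg he]
          · rw [afun_tr (by omega) (by omega), afun_tr hT (by omega)]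
      · by_cases hj1 : j < 2^m
        · rw [afun_bl (by omega) (by omega), afun_bl (by omega) hj1]
        · by_cases hj2 : j < 2^(m+1)
          · rw [afun_bm (by omega) (by omega) (by omega), afun_bm (by omega) (by omega) hj2]
            by_cases he : j = t
            · rw [if_pos (by omega), if_pos he]
            · rw [if_neg (by omega), if_neg he]
          · rw [show Afun (m+1) t j = Afun m (t - 2^m) (j - 2^(m+1)) from
                afun_br (by omega) (by omega),
              afun_br (by omega) (by omega),
              show 2*t+1 - 2^(m+1) = 2*(t - 2^m)+1 by omega,
              show 2*j+1 - 2^(m+2) = 2*(j - 2^(m+1))+1 by omega,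
              (ih (t - 2^m) (j - 2^(m+1)) (by omega) (by omega)).2.2.2]

/-- `Bfun m i j` is the `(i,j)` entry (0-indexed) of the square matrix
`B_{m+1}` of size `2^m`, so `B_d = Bfun (d-1)`.  `B_1 = (1)` and `B_d` is the
vertical block concatenation of `B_{d-1} (ℰ_{d-1}^{(1)})ᵗ` (on top) and
`B_{d-1} A_{d-1}` (on the bottom): entrywise, since `(ℰ^{(1)})_{ij} = δ_{i,2j}`
(0-indexed), `(B_{d-1} (ℰ_{d-1}^{(1)})ᵗ)_{ij} = B_{d-1,(i,j/2)}` for even `j`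
and `0` for odd `j`, while `(B_{d-1} A_{d-1})_{ij} = ∑_k B_{d-1,(i,k)} A_{d-1,(k,j)}`. -/
def Bfun : ℕ → ℕ → ℕ → ℤ
  | 0, i, j => if i = 0 ∧ j = 0 then 1 else 0
  | m + 1, i, j =>
    if i < 2 ^ m then
      (if j % 2 = 0 then Bfun m i (j / 2) else 0)
    else
      ∑ k : Fin (2 ^ m), Bfun m (i - 2 ^ m) (k : ℕ) * Afun m (k : ℕ) j

lemma bfun_succ (m i j : ℕ) : Bfun (m+1) i j =
    if i < 2 ^ m then
      (if j % 2 = 0 then Bfun m i (j / 2) else 0)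
    else
      ∑ k : Fin (2 ^ m), Bfun m (i - 2 ^ m) (k : ℕ) * Afun m (k : ℕ) j := rfl

lemma pow_succ_add (m : ℕ) : 2^(m+1) = 2^m + 2^m := by rw [pow_succ]; ring

/-- parity equiv -/
def pe (m : ℕ) : (Fin (2^m) ⊕ Fin (2^m)) ≃ Fin (2^(m+1)) where
  toFun := Sum.elim
    (fun t => ⟨2*t, by have h := t.isLt; have h2 := pow_succ_add m; omega⟩)
    (fun t => ⟨2*t+1, by have h := t.isLt; have h2 := pow_succ_add m; omega⟩)
  invFun j :=
    if (j : ℕ) % 2 = 0 then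
      Sum.inl ⟨(j : ℕ)/2, by have h := j.isLt; have h2 := pow_succ_add m; omega⟩
    else
      Sum.inr ⟨(j : ℕ)/2, by have h := j.isLt; have h2 := pow_succ_add m; omega⟩
  left_inv := by
    rintro (t | t) <;> simp only [Sum.elim_inl, Sum.elim_inr]
    · simp only [show 2*(t:ℕ)%2 = 0 by omega, ↓reduceIte]
      congr 1; apply Fin.ext; show 2*(t:ℕ)/2 = (t:ℕ); omega
    · simp only [show ¬ ((2*(t:ℕ)+1)%2 = 0) by omega, ↓reduceIte]
      congr 1; apply Fin.ext; show (2*(t:ℕ)+1)/2 = (t:ℕ); omega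
  right_inv := by
    intro j
    by_cases h : (j : ℕ) % 2 = 0 <;>
      simp only [if_pos, if_neg, h, Sum.elim_inl, Sum.elim_inr, reduceCtorEq] <;>
      simp [Fin.ext_iff] <;> omega

/-- shift equiv -/
def se (m : ℕ) : (Fin (2^m) ⊕ Fin (2^m)) ≃ Fin (2^(m+1)) where
  toFun := Sum.elim
    (fun t => ⟨t, by have h := t.isLt; have h2 := pow_succ_add m; omega⟩)
    (fun t => ⟨2^m + t, by have h := t.isLt; have h2 := pow_succ_add m; omega⟩)
  invFun j :=
    if h : (j : ℕ) < 2^m then Sum.inl ⟨j, h⟩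
    else Sum.inr ⟨(j : ℕ) - 2^m, by have h := j.isLt; have h2 := pow_succ_add m; omega⟩
  left_inv := by
    rintro (t | t) <;> simp only [Sum.elim_inl, Sum.elim_inr]
    · simp only [t.isLt, ↓reduceDIte]
    · simp only [show ¬ (2^m + (t:ℕ) < 2^m) by omega, ↓reduceDIte]
      simp [Fin.ext_iff]
  right_inv := by
    intro j
    by_cases h : (j : ℕ) < 2^m <;> simp only [dif_pos, dif_neg, h, Sum.elim_inl, Sum.elim_inr] <;>
      simp [Fin.ext_iff] <;> omega

@[simp] lemma pe_inl (m : ℕ) (t : Fin (2^m)) : ((pe m (Sum.inl t)) : ℕ) = 2*t := rfl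
@[simp] lemma pe_inr (m : ℕ) (t : Fin (2^m)) : ((pe m (Sum.inr t)) : ℕ) = 2*t+1 := rfl
@[simp] lemma se_inl (m : ℕ) (t : Fin (2^m)) : ((se m (Sum.inl t)) : ℕ) = t := rfl
@[simp] lemma se_inr (m : ℕ) (t : Fin (2^m)) : ((se m (Sum.inr t)) : ℕ) = 2^m + t := rfl

def DZ (m : ℕ) : Matrix (Fin (2^m)) (Fin (2^m)) (ZMod 2) :=
  Matrix.of fun i j => ((Afun m i (2*j+1) : ℤ) : ZMod 2)
def BZ (m : ℕ) : Matrix (Fin (2^m)) (Fin (2^m)) (ZMod 2) :=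
  Matrix.of fun i j => ((Bfun m i j : ℤ) : ZMod 2)

lemma detDZ (m : ℕ) : (DZ m).det = 1 := by
  induction m with
  | zero =>
    have h1 : DZ 0 = 1 := by
      ext i j
      have hij : i = j := Fin.ext (by omega)
      subst hij
      have hi : (i : ℕ) = 0 := by omega
      rw [Matrix.one_apply_eq]
      simp [DZ, Afun, hi]
    rw [h1, Matrix.det_one]
  | succ m ih =>
    have hsub : (DZ (m+1)).submatrix (pe m) (pe m) =
        Matrix.fromBlocks 1 0
          (Matrix.of fun t u : Fin (2^m) =>
            ((Afun (m+1) (2*(t:ℕ)+1) (2*(2*(u:ℕ))+1) : ℤ) : ZMod 2)) (DZ m) := by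
      ext x y
      have h2 := pow_succ_add m
      rcases x with t | t <;> rcases y with u | u <;>
        simp only [Matrix.submatrix_apply, DZ, Matrix.of_apply, Matrix.fromBlocks_apply₁₁,
          Matrix.fromBlocks_apply₁₂, Matrix.fromBlocks_apply₂₁, Matrix.fromBlocks_apply₂₂,
          pe_inl, pe_inr]
      · rw [(afun_key m t (2*u) t.isLt (by have := u.isLt; omega)).2.1]
        by_cases he : t = u
        · rw [if_pos (by omega), he, Matrix.one_apply_eq]; norm_num
        · rw [if_neg (by have := Fin.val_ne_of_ne he; omega),
            Matrix.one_apply_ne (by exact he)]; norm_num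
      · rw [(afun_key m t (2*u+1) t.isLt (by have := u.isLt; omega)).2.1,
          if_neg (by omega), Matrix.zero_apply]; norm_num
      · rw [(afun_key m t (2*u+1) t.isLt (by have := u.isLt; omega)).2.2.2]
    rw [← Matrix.det_submatrix_equiv_self (pe m) (DZ (m+1)), hsub,
      Matrix.det_fromBlocks_zero₁₂, Matrix.det_one, one_mul, ih]

lemma detBZ (m : ℕ) : (BZ m).det = 1 := by
  induction m with
  | zero =>
    have h1 : BZ 0 = 1 := by
      ext i j
      have hij : i = j := Fin.ext (by omega)
      subst hij
      have hi : (i : ℕ) = 0 := by omega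
      rw [Matrix.one_apply_eq]
      simp [BZ, Bfun, hi]
    rw [h1, Matrix.det_one]
  | succ m ih =>
    have h2 := pow_succ_add m
    set σ : Equiv.Perm (Fin (2^m) ⊕ Fin (2^m)) := (pe m).trans (se m).symm with hσ
    have hsub : (BZ (m+1)).submatrix (se m) (pe m) =
        Matrix.fromBlocks (BZ m) 0
          (Matrix.of fun i j : Fin (2^m) =>
            ((∑ k : Fin (2^m), Bfun m i k * Afun m k (2*(j:ℕ)) : ℤ) : ZMod 2))
          (BZ m * DZ m) := by
      ext x y
      rcases x with i | i <;> rcases y with j | j <;>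
        simp only [Matrix.submatrix_apply, BZ, Matrix.of_apply, Matrix.fromBlocks_apply₁₁,
          Matrix.fromBlocks_apply₁₂, Matrix.fromBlocks_apply₂₁, Matrix.fromBlocks_apply₂₂,
          se_inl, se_inr, pe_inl, pe_inr]
      · rw [bfun_succ, if_pos (show (i:ℕ) < 2^m from i.isLt), if_pos (by omega),
          show 2*(j:ℕ)/2 = (j:ℕ) by omega]
      · rw [bfun_succ, if_pos (show (i:ℕ) < 2^m from i.isLt), if_neg (by omega),
          Matrix.zero_apply]
        norm_num
      · rw [bfun_succ, if_neg (by omega), show 2^m + (i:ℕ) - 2^m = (i:ℕ) by omega]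
      · rw [bfun_succ, if_neg (by omega), show 2^m + (i:ℕ) - 2^m = (i:ℕ) by omega,
          Matrix.mul_apply]
        push_cast
        rfl
    have hτ : (BZ (m+1)).submatrix (se m) (pe m) =
        ((BZ (m+1)).submatrix (se m) (se m)).submatrix id ⇑σ := by
      ext i j
      simp [hσ, Matrix.submatrix_apply]
    have hperm := Matrix.det_permute' σ ((BZ (m+1)).submatrix (se m) (se m))
    rw [← hτ, hsub, Matrix.det_fromBlocks_zero₁₂, Matrix.det_submatrix_equiv_self] at hperm
    have hsign : ((Equiv.Perm.sign σ : ℤˣ) : ZMod 2) = 1 := by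
      rcases Int.units_eq_one_or (Equiv.Perm.sign σ) with h | h <;> rw [h] <;> decide
    rw [hsign, one_mul] at hperm
    rw [← hperm, ih, Matrix.det_mul, ih, detDZ, one_mul, one_mul]

/-- The square integer matrix `B_d` of size `2^(d-1)` (for `d ≥ 1`). -/
def Bmat (d : ℕ) : Matrix (Fin (2 ^ (d - 1))) (Fin (2 ^ (d - 1))) ℤ :=
  Matrix.of fun i j => Bfun (d - 1) (i : ℕ) (j : ℕ)

/-- For all `d ≥ 1` the determinant of the square integer
matrix `B_d` of size `2^(d-1)` is odd: `det(B_d) ≡ 1 (mod 2)`. -/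
theorem statement4 (d : ℕ) (hd : 1 ≤ d) :
    Int.ModEq 2 (Matrix.det (Bmat d)) 1 := by
  refine (ZMod.intCast_eq_intCast_iff _ _ 2).mp ?_
  have hmap : (Bmat d).map (Int.castRingHom (ZMod 2)) = BZ (d-1) := by
    ext i j
    rfl
  rw [show ((Matrix.det (Bmat d) : ℤ) : ZMod 2) =
      (Int.castRingHom (ZMod 2)) (Matrix.det (Bmat d)) from rfl,
    RingHom.map_det, RingHom.mapMatrix_apply, hmap, detBZ]
  norm_num
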